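/- Let (𝒰,𝒱) be a cotorsion pair on an exact category 𝓑 with enough projectives and injectives, with associated half exact functor H. If 𝒰 ⊆ 𝒱, then H(B) = 0 if and only if B ∈ 𝒱; if 𝒱 ⊆ 𝒰, then H(B) = 0 if and only if B ∈ 𝒰. -/

import Mathlib

open CategoryTheory Limits ZeroObject

universe v u

variable (C : Type u) [Category.{v} C] [Preadditive C] [HasZeroObject C]
  [HasBinaryBiproducts C]

/-- An exact structure (in the sense of Quillen) on an additive category,
given by a class of short exact sequences (conflations). -/
structure ExactStructure : Type (max u (v + 1)) where
  /-- the class of short exact sequences -/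
  IsSES : ∀ {A B X : C}, (A ⟶ B) → (B ⟶ X) → Prop
  comp_zero : ∀ {A B X : C} {f : A ⟶ B} {g : B ⟶ X}, IsSES f g → f ≫ g = 0
  isKernel : ∀ {A B X : C} {f : A ⟶ B} {g : B ⟶ X} (h : IsSES f g),
      Nonempty (IsLimit (KernelFork.ofι f (comp_zero h)))
  isCokernel : ∀ {A B X : C} {f : A ⟶ B} {g : B ⟶ X} (h : IsSES f g),
      Nonempty (IsColimit (CokernelCofork.ofπ g (comp_zero h)))
  ses_iso_congr : ∀ {A B X A' B' X' : C} {f : A ⟶ B} {g : B ⟶ X}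
      (eA : A' ≅ A) (eB : B ≅ B') (eX : X ≅ X'), IsSES f g →
      IsSES (eA.hom ≫ f ≫ eB.hom) (eB.inv ≫ g ≫ eX.hom)
  id_ses : ∀ A : C, IsSES (𝟙 A) (0 : A ⟶ 0)
  id_ses' : ∀ A : C, IsSES (0 : (0 : C) ⟶ A) (𝟙 A)
  infl_comp : ∀ {A B X : C} (f : A ⟶ B) (f' : B ⟶ X),
      (∃ (Z : C) (g : B ⟶ Z), IsSES f g) → (∃ (Z : C) (g : X ⟶ Z), IsSES f' g) →
      ∃ (Z : C) (g : X ⟶ Z), IsSES (f ≫ f') g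
  defl_comp : ∀ {A B X : C} (g : A ⟶ B) (g' : B ⟶ X),
      (∃ (Z : C) (f : Z ⟶ A), IsSES f g) → (∃ (Z : C) (f : Z ⟶ B), IsSES f g') →
      ∃ (Z : C) (f : Z ⟶ A), IsSES f (g ≫ g')
  pushout_infl : ∀ {A B A' : C} (f : A ⟶ B) (a : A ⟶ A'),
      (∃ (Z : C) (g : B ⟶ Z), IsSES f g) →
      ∃ (P : C) (f' : A' ⟶ P) (b : B ⟶ P), IsPushout a f f' b ∧
        ∃ (Z : C) (g : P ⟶ Z), IsSES f' g
  pullback_defl : ∀ {B X X' : C} (g : B ⟶ X) (x : X' ⟶ X),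
      (∃ (Z : C) (f : Z ⟶ B), IsSES f g) →
      ∃ (P : C) (g' : P ⟶ X') (b : P ⟶ B), IsPullback g' b x g ∧
        ∃ (Z : C) (f : Z ⟶ P), IsSES f g'

variable {C}

namespace ExactStructure

variable (E : ExactStructure C)

/-- inflations (admissible monomorphisms) -/
def Infl {A B : C} (f : A ⟶ B) : Prop := ∃ (X : C) (g : B ⟶ X), E.IsSES f g

/-- deflations (admissible epimorphisms) -/
def Defl {B X : C} (g : B ⟶ X) : Prop := ∃ (A : C) (f : A ⟶ B), E.IsSES f g

/-- projective objects relative to the exact structure -/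
def Proj (P : C) : Prop :=
  ∀ ⦃B X : C⦄ (g : B ⟶ X), E.Defl g → ∀ h : P ⟶ X, ∃ l : P ⟶ B, l ≫ g = h

/-- injective objects relative to the exact structure -/
def Inj (I : C) : Prop :=
  ∀ ⦃A B : C⦄ (f : A ⟶ B), E.Infl f → ∀ h : A ⟶ I, ∃ l : B ⟶ I, f ≫ l = h

/-- the exact category has enough projectives -/
def EnoughProj : Prop :=
  ∀ X : C, ∃ (P K : C) (i : K ⟶ P) (p : P ⟶ X), E.Proj P ∧ E.IsSES i p

/-- the exact category has enough injectives -/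
def EnoughInj : Prop :=
  ∀ X : C, ∃ (I Z : C) (i : X ⟶ I) (p : I ⟶ Z), E.Inj I ∧ E.IsSES i p

end ExactStructure

/-- a morphism factors through an object of a given class of objects -/
def FactorsThru (S : Set C) {X Y : C} (f : X ⟶ Y) : Prop :=
  ∃ (W : C) (a : X ⟶ W) (b : W ⟶ Y), W ∈ S ∧ a ≫ b = f

/-- A cotorsion pair `(𝒰, 𝒱)` on the exact category `(C, E)`. -/
structure CotorsionPair (E : ExactStructure C) where
  U : Set C
  V : Set C
  U_summand : ∀ ⦃X Z : C⦄, Z ∈ U → (∃ (i : X ⟶ Z) (r : Z ⟶ X), i ≫ r = 𝟙 X) → X ∈ U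
  V_summand : ∀ ⦃X Z : C⦄, Z ∈ V → (∃ (i : X ⟶ Z) (r : Z ⟶ X), i ≫ r = 𝟙 X) → X ∈ V
  U_add : ∀ ⦃X Y : C⦄, X ∈ U → Y ∈ U → (X ⊞ Y) ∈ U
  V_add : ∀ ⦃X Y : C⦄, X ∈ V → Y ∈ V → (X ⊞ Y) ∈ V
  ext_vanish : ∀ ⦃A B X : C⦄ {f : A ⟶ B} {g : B ⟶ X}, E.IsSES f g → X ∈ U → A ∈ V →
      ∃ r : B ⟶ A, f ≫ r = 𝟙 A
  res : ∀ B : C, ∃ (VB UB : C) (i : VB ⟶ UB) (p : UB ⟶ B),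
      VB ∈ V ∧ UB ∈ U ∧ E.IsSES i p
  cores : ∀ B : C, ∃ (VB UB : C) (i : B ⟶ VB) (p : VB ⟶ UB),
      VB ∈ V ∧ UB ∈ U ∧ E.IsSES i p

namespace CotorsionPair

variable {E : ExactStructure C} (CP : CotorsionPair E)

/-- `𝒲 = 𝒰 ∩ 𝒱` -/
def W : Set C := CP.U ∩ CP.V

/-- `𝓑⁺`: objects admitting a short exact sequence `V ↣ W ↠ B` with `V ∈ 𝒱`, `W ∈ 𝒲`. -/
def Bplus : Set C :=
  {B | ∃ (V₀ W₀ : C) (i : V₀ ⟶ W₀) (p : W₀ ⟶ B), V₀ ∈ CP.V ∧ W₀ ∈ CP.W ∧ E.IsSES i p}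

/-- `𝓑⁻`: objects admitting a short exact sequence `B ↣ W ↠ U` with `W ∈ 𝒲`, `U ∈ 𝒰`. -/
def Bminus : Set C :=
  {B | ∃ (W₀ U₀ : C) (i : B ⟶ W₀) (p : W₀ ⟶ U₀), W₀ ∈ CP.W ∧ U₀ ∈ CP.U ∧ E.IsSES i p}

/-- the heart subcategory `𝓗 = 𝓑⁺ ∩ 𝓑⁻` -/
def Heart : Set C := CP.Bplus ∩ CP.Bminus

/-- the ideal relation defining the additive quotient `𝓑/𝒲` -/
def wRel : HomRel C := fun {X Y} f g =>
  ∃ (W : C) (a : X ⟶ W) (b : W ⟶ Y), W ∈ CP.W ∧ a ≫ b = f - g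

/-- the quotient category `𝓑/𝒲` -/
abbrev QW := CategoryTheory.Quotient CP.wRel

/-- the quotient functor `π : 𝓑 → 𝓑/𝒲` -/
abbrev qf : C ⥤ CP.QW := Quotient.functor _

/-- `𝓑⁺/𝒲` as a full subcategory of `𝓑/𝒲` -/
abbrev BplusCat := ObjectProperty.FullSubcategory (fun X : CP.QW => X.as ∈ CP.Bplus)

/-- `𝓑⁻/𝒲` as a full subcategory of `𝓑/𝒲` -/
abbrev BminusCat := ObjectProperty.FullSubcategory (fun X : CP.QW => X.as ∈ CP.Bminus)

/-- the heart `𝓗/𝒲` as a full subcategory of `𝓑/𝒲` -/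
abbrev HeartCat := ObjectProperty.FullSubcategory (fun X : CP.QW => X.as ∈ CP.Heart)

/-- the inclusion `𝓑⁺/𝒲 ↪ 𝓑/𝒲` -/
abbrev inclPlus : CP.BplusCat ⥤ CP.QW := ObjectProperty.ι _

/-- the inclusion `𝓑⁻/𝒲 ↪ 𝓑/𝒲` -/
abbrev inclMinus : CP.BminusCat ⥤ CP.QW := ObjectProperty.ι _

/-- the inclusion `𝓗/𝒲 ↪ 𝓑/𝒲` -/
abbrev inclHeart : CP.HeartCat ⥤ CP.QW := ObjectProperty.ι _

/-- `add(𝒰 ∗ 𝒱)`: objects `X` admitting a short exact sequence `U ↣ X ⊕ Y ↠ V`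
with `U ∈ 𝒰`, `V ∈ 𝒱`. -/
def addUV : Set C :=
  {X | ∃ (Y U₀ V₀ : C) (i : U₀ ⟶ X ⊞ Y) (p : X ⊞ Y ⟶ V₀),
    U₀ ∈ CP.U ∧ V₀ ∈ CP.V ∧ E.IsSES i p}

end CotorsionPair


section Aux
set_option linter.unusedSectionVars false
open Preadditive

variable {E : ExactStructure C} (CP : CotorsionPair E)

namespace ExactStructure

variable (E)

lemma ses_epi {A B X : C} {f : A ⟶ B} {g : B ⟶ X} (h : E.IsSES f g) : Epi g := by
  obtain ⟨hc⟩ := E.isCokernel h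
  exact ⟨fun u v w => Cofork.IsColimit.hom_ext hc (by simpa using w)⟩

lemma ses_mono {A B X : C} {f : A ⟶ B} {g : B ⟶ X} (h : E.IsSES f g) : Mono f := by
  obtain ⟨hl⟩ := E.isKernel h
  exact ⟨fun u v w => Fork.IsLimit.hom_ext hl (by simpa using w)⟩

lemma ses_desc {A B X : C} {f : A ⟶ B} {g : B ⟶ X} (h : E.IsSES f g) {W : C}
    (k : B ⟶ W) (hk : f ≫ k = 0) : ∃ l : X ⟶ W, g ≫ l = k := by
  obtain ⟨hc⟩ := E.isCokernel h
  obtain ⟨l, hl⟩ := CokernelCofork.IsColimit.desc' hc k hk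
  exact ⟨l, by simpa using hl⟩

lemma ses_lift {A B X : C} {f : A ⟶ B} {g : B ⟶ X} (h : E.IsSES f g) {W : C}
    (k : W ⟶ B) (hk : k ≫ g = 0) : ∃ l : W ⟶ A, l ≫ f = k := by
  obtain ⟨hl⟩ := E.isKernel h
  obtain ⟨l, hl'⟩ := KernelFork.IsLimit.lift' hl k hk
  exact ⟨l, by simpa using hl'⟩

/-- retraction of the inflation gives a section of the deflation -/
lemma ses_section_of_retraction {A B X : C} {f : A ⟶ B} {g : B ⟶ X} (h : E.IsSES f g)
    {r : B ⟶ A} (hr : f ≫ r = 𝟙 A) : ∃ s : X ⟶ B, s ≫ g = 𝟙 X := by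
  have h0 : f ≫ (𝟙 B - r ≫ f) = 0 := by
    rw [comp_sub, Category.comp_id, ← Category.assoc, hr, Category.id_comp, sub_self]
  obtain ⟨s, hs⟩ := E.ses_desc h _ h0
  have hepi : Epi g := E.ses_epi h
  refine ⟨s, ?_⟩
  rw [← cancel_epi g, ← Category.assoc, hs, sub_comp, Category.id_comp, Category.assoc,
    E.comp_zero h, Limits.comp_zero, sub_zero, Category.comp_id]

/-- section of the deflation gives a retraction of the inflation -/
lemma ses_retraction_of_section {A B X : C} {f : A ⟶ B} {g : B ⟶ X} (h : E.IsSES f g)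
    {s : X ⟶ B} (hs : s ≫ g = 𝟙 X) : ∃ r : B ⟶ A, f ≫ r = 𝟙 A := by
  have h0 : (𝟙 B - g ≫ s) ≫ g = 0 := by
    rw [sub_comp, Category.id_comp, Category.assoc, hs, Category.comp_id, sub_self]
  obtain ⟨l, hl⟩ := E.ses_lift h _ h0
  have hmono : Mono f := E.ses_mono h
  refine ⟨l, ?_⟩
  rw [← cancel_mono f, Category.assoc, hl, comp_sub, Category.comp_id, ← Category.assoc,
    E.comp_zero h, Limits.zero_comp, sub_zero, Category.id_comp]

/-- cokernels are preserved by pushout along an inflation -/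
lemma coker_iso_of_pushout {A B X A' P Z : C} {f : A ⟶ B} {g : B ⟶ X} {a : A ⟶ A'}
    {f' : A' ⟶ P} {b : B ⟶ P} {g' : P ⟶ Z}
    (hs : E.IsSES f g) (hpo : IsPushout a f f' b) (hs' : E.IsSES f' g') :
    Nonempty (Z ≅ X) := by
  obtain ⟨u, hu⟩ := E.ses_desc hs (b ≫ g') (by
    rw [← Category.assoc, ← hpo.w, Category.assoc, E.comp_zero hs', Limits.comp_zero])
  have hwcond : a ≫ (0 : A' ⟶ X) = f ≫ g := by rw [Limits.comp_zero, E.comp_zero hs]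
  set w : P ⟶ X := hpo.desc 0 g hwcond with hw
  have hw1 : f' ≫ w = 0 := hpo.inl_desc _ _ _
  have hw2 : b ≫ w = g := hpo.inr_desc _ _ _
  obtain ⟨v, hv⟩ := E.ses_desc hs' w hw1
  have hepi : Epi g := E.ses_epi hs
  have hepi' : Epi g' := E.ses_epi hs'
  have huv : u ≫ v = 𝟙 X := by
    rw [← cancel_epi g, ← Category.assoc, hu, Category.assoc, hv, hw2, Category.comp_id]
  have hwu : w ≫ u = g' := by
    apply hpo.hom_ext
    · rw [← Category.assoc, hw1, Limits.zero_comp, E.comp_zero hs']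
    · rw [← Category.assoc, hw2, hu]
  have hvu : v ≫ u = 𝟙 Z := by
    rw [← cancel_epi g', ← Category.assoc, hv, hwu, Category.comp_id]
  exact ⟨⟨v, u, hvu, huv⟩⟩

/-- kernels are preserved by pullback along a deflation -/
lemma ker_iso_of_pullback {A B X X' P Z : C} {f : A ⟶ B} {g : B ⟶ X} {g' : P ⟶ X'}
    {b : P ⟶ B} {x : X' ⟶ X} {f₀ : Z ⟶ P}
    (hs : E.IsSES f g) (hpb : IsPullback g' b x g) (hs' : E.IsSES f₀ g') :
    Nonempty (Z ≅ A) := by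
  obtain ⟨u, hu⟩ := E.ses_lift hs (f₀ ≫ b) (by
    rw [Category.assoc, ← hpb.w, ← Category.assoc, E.comp_zero hs', Limits.zero_comp])
  have hwcond : (0 : A ⟶ X') ≫ x = f ≫ g := by rw [Limits.zero_comp, E.comp_zero hs]
  set w : A ⟶ P := hpb.lift 0 f hwcond with hw
  have hw1 : w ≫ g' = 0 := hpb.lift_fst _ _ _
  have hw2 : w ≫ b = f := hpb.lift_snd _ _ _
  obtain ⟨v, hv⟩ := E.ses_lift hs' w hw1
  have hmono : Mono f := E.ses_mono hs
  have hmono' : Mono f₀ := E.ses_mono hs'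
  have hvu : v ≫ u = 𝟙 A := by
    rw [← cancel_mono f, Category.assoc, hu, ← Category.assoc, hv, hw2, Category.id_comp]
  have huw : u ≫ w = f₀ := by
    apply hpb.hom_ext
    · rw [Category.assoc, hw1, Limits.comp_zero, E.comp_zero hs']
    · rw [Category.assoc, hw2, hu]
  have huv : u ≫ v = 𝟙 Z := by
    rw [← cancel_mono f₀, Category.assoc, hv, huw, Category.id_comp]
  exact ⟨⟨u, v, huv, hvu⟩⟩

/-- the pullback of an inflation along a deflation is an inflation, with the
composed deflation as its cokernel -/
lemma pullback_infl_ses {B₀ VB UB U₁ V₁ K : C} {i : B₀ ⟶ VB} {p : VB ⟶ UB}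
    {j : V₁ ⟶ U₁} {q : U₁ ⟶ VB} {π : K ⟶ B₀} {c : K ⟶ U₁}
    (hip : E.IsSES i p) (hjq : E.IsSES j q) (hpb : IsPullback π c i q) :
    E.IsSES c (q ≫ p) := by
  obtain ⟨Z, f, hZ⟩ := E.defl_comp q p ⟨V₁, j, hjq⟩ ⟨B₀, i, hip⟩
  -- f : Z ⟶ U₁ is a kernel of q ≫ p; identify Z with K
  obtain ⟨t, ht⟩ := E.ses_lift hip (f ≫ q) (by
    rw [Category.assoc, E.comp_zero hZ])
  set φ : Z ⟶ K := hpb.lift t f ht with hφ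
  have hφ1 : φ ≫ π = t := hpb.lift_fst _ _ _
  have hφ2 : φ ≫ c = f := hpb.lift_snd _ _ _
  have hcqp : c ≫ (q ≫ p) = 0 := by
    rw [← Category.assoc, ← hpb.w, Category.assoc, E.comp_zero hip, Limits.comp_zero]
  obtain ⟨ψ, hψ⟩ := E.ses_lift hZ c hcqp
  have hmonoF : Mono f := E.ses_mono hZ
  have hmonoI : Mono i := E.ses_mono hip
  have hφψ : φ ≫ ψ = 𝟙 Z := by
    rw [← cancel_mono f, Category.assoc, hψ, hφ2, Category.id_comp]
  have hψt : ψ ≫ t = π := by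
    rw [← cancel_mono i, Category.assoc, ht, ← Category.assoc, hψ, hpb.w]
  have hψφ : ψ ≫ φ = 𝟙 K := by
    apply hpb.hom_ext
    · rw [Category.assoc, hφ1, hψt, Category.id_comp]
    · rw [Category.assoc, hφ2, hψ, Category.id_comp]
  have := E.ses_iso_congr (⟨ψ, φ, hψφ, hφψ⟩ : K ≅ Z) (Iso.refl U₁) (Iso.refl UB) hZ
  simpa [hψ] using this

/-- the pushout of a deflation along an inflation is a deflation, with the
composed inflation as its kernel -/
lemma pushout_defl_ses {B₀ VB UB V₁ U₁ K : C} {j : VB ⟶ UB} {p : UB ⟶ B₀}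
    {q : UB ⟶ V₁} {pV : V₁ ⟶ U₁} {f' : B₀ ⟶ K} {b : V₁ ⟶ K}
    (hjp : E.IsSES j p) (hq : E.IsSES q pV) (hpo : IsPushout p q f' b) :
    E.IsSES (j ≫ q) b := by
  obtain ⟨Z, g, hZ⟩ := E.infl_comp j q ⟨B₀, p, hjp⟩ ⟨U₁, pV, hq⟩
  -- g : V₁ ⟶ Z is a cokernel of j ≫ q; identify Z with K
  obtain ⟨t, ht⟩ := E.ses_desc hjp (q ≫ g) (by
    rw [← Category.assoc, E.comp_zero hZ])
  set φ : K ⟶ Z := hpo.desc t g ht with hφ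
  have hφ1 : f' ≫ φ = t := hpo.inl_desc _ _ _
  have hφ2 : b ≫ φ = g := hpo.inr_desc _ _ _
  have hjqb : (j ≫ q) ≫ b = 0 := by
    rw [Category.assoc, ← hpo.w, ← Category.assoc, E.comp_zero hjp, Limits.zero_comp]
  obtain ⟨ψ, hψ⟩ := E.ses_desc hZ b hjqb
  have hepiG : Epi g := E.ses_epi hZ
  have hepiP : Epi p := E.ses_epi hjp
  have htψ : t ≫ ψ = f' := by
    rw [← cancel_epi p, ← Category.assoc, ht, Category.assoc, hψ, hpo.w]
  have hφψ : φ ≫ ψ = 𝟙 K := by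
    apply hpo.hom_ext
    · rw [← Category.assoc, hφ1, htψ, Category.comp_id]
    · rw [← Category.assoc, hφ2, hψ, Category.comp_id]
  have hψφ : ψ ≫ φ = 𝟙 Z := by
    rw [← cancel_epi g, ← Category.assoc, hψ, hφ2, Category.comp_id]
  have := E.ses_iso_congr (Iso.refl VB) (Iso.refl V₁) (⟨ψ, φ, hψφ, hφψ⟩ : Z ≅ K) hZ
  simpa [hψ] using this

end ExactStructure

namespace CotorsionPair

lemma mem_U_of_iso {X Z : C} (e : X ≅ Z) (hZ : Z ∈ CP.U) : X ∈ CP.U :=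
  CP.U_summand hZ ⟨e.hom, e.inv, e.hom_inv_id⟩

lemma mem_V_of_iso {X Z : C} (e : X ≅ Z) (hZ : Z ∈ CP.V) : X ∈ CP.V :=
  CP.V_summand hZ ⟨e.hom, e.inv, e.hom_inv_id⟩

lemma zero_mem_U : (0 : C) ∈ CP.U := by
  obtain ⟨V', U', i, p, hV, hU, _⟩ := CP.res 0
  exact CP.U_summand hU ⟨0, 0, (isZero_zero C).eq_of_src _ _⟩

lemma zero_mem_V : (0 : C) ∈ CP.V := by
  obtain ⟨V', U', i, p, hV, hU, _⟩ := CP.res 0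
  exact CP.V_summand hV ⟨0, 0, (isZero_zero C).eq_of_src _ _⟩

lemma zero_mem_W : (0 : C) ∈ CP.W := ⟨CP.zero_mem_U, CP.zero_mem_V⟩

lemma W_biprod {X Y : C} (hX : X ∈ CP.W) (hY : Y ∈ CP.W) : (X ⊞ Y) ∈ CP.W :=
  ⟨CP.U_add hX.1 hY.1, CP.V_add hX.2 hY.2⟩

instance wRel_congruence : Congruence CP.wRel where
  equivalence := by
    intro X Y
    constructor
    · intro f
      exact ⟨0, 0, 0, CP.zero_mem_W, by simp⟩
    · rintro f g ⟨W₀, a, b, hW, hab⟩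
      exact ⟨W₀, a, -b, hW, by rw [Preadditive.comp_neg, hab, neg_sub]⟩
    · rintro f g h ⟨W₁, a₁, b₁, h₁, e₁⟩ ⟨W₂, a₂, b₂, h₂, e₂⟩
      refine ⟨W₁ ⊞ W₂, biprod.lift a₁ a₂, biprod.desc b₁ b₂, CP.W_biprod h₁ h₂, ?_⟩
      rw [biprod.lift_desc, e₁, e₂]; abel
  comp_left := by
    rintro X Y Z f g g' ⟨W₀, a, b, hW, hab⟩
    exact ⟨W₀, f ≫ a, b, hW, by rw [Category.assoc, hab, Preadditive.comp_sub]⟩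
  comp_right := by
    rintro X Y Z f f' g ⟨W₀, a, b, hW, hab⟩
    exact ⟨W₀, a, b ≫ g, hW, by rw [← Category.assoc, hab, Preadditive.sub_comp]⟩

lemma factorsThru_of_wzero_src {X Y : C} (h : FactorsThru CP.W (𝟙 X)) (f : X ⟶ Y) :
    FactorsThru CP.W f := by
  obtain ⟨W₀, a, b, hW, hab⟩ := h
  exact ⟨W₀, a, b ≫ f, hW, by rw [← Category.assoc, hab, Category.id_comp]⟩

lemma factorsThru_of_wzero_tgt {X Y : C} (h : FactorsThru CP.W (𝟙 Y)) (f : X ⟶ Y) :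
    FactorsThru CP.W f := by
  obtain ⟨W₀, a, b, hW, hab⟩ := h
  exact ⟨W₀, f ≫ a, b, hW, by rw [Category.assoc, hab, Category.comp_id]⟩

lemma subsingleton_qhom {X Y : C} (h : ∀ f : X ⟶ Y, FactorsThru CP.W f) :
    Subsingleton (CP.qf.obj X ⟶ CP.qf.obj Y) := by
  constructor
  intro φ ψ
  obtain ⟨f, rfl⟩ := CP.qf.map_surjective φ
  obtain ⟨g, rfl⟩ := CP.qf.map_surjective ψ
  rw [Quotient.functor_map_eq_iff]
  obtain ⟨W₀, a, b, hW, hab⟩ := h (f - g)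
  exact ⟨W₀, a, b, hW, hab⟩

lemma factorsThru_of_subsingleton {X Y : C}
    (h : Subsingleton (CP.qf.obj X ⟶ CP.qf.obj Y)) (f : X ⟶ Y) : FactorsThru CP.W f := by
  have : CP.qf.map f = CP.qf.map 0 := h.elim _ _
  rw [Quotient.functor_map_eq_iff] at this
  obtain ⟨W₀, a, b, hW, hab⟩ := this
  exact ⟨W₀, a, b, hW, by simpa using hab⟩

lemma w_mem_Bminus {X : C} (h : X ∈ CP.W) : X ∈ CP.Bminus :=
  ⟨X, 0, 𝟙 X, 0, h, CP.zero_mem_U, E.id_ses X⟩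

lemma w_mem_Bplus {X : C} (h : X ∈ CP.W) : X ∈ CP.Bplus :=
  ⟨0, X, 0, 𝟙 X, CP.zero_mem_V, h, E.id_ses' X⟩

lemma mem_Bplus_all (hUV : CP.U ⊆ CP.V) (B : C) : B ∈ CP.Bplus := by
  obtain ⟨V', U', i, p, hV, hU, hs⟩ := CP.res B
  exact ⟨V', U', i, p, hV, ⟨hU, hUV hU⟩, hs⟩

lemma mem_Bminus_all (hVU : CP.V ⊆ CP.U) (B : C) : B ∈ CP.Bminus := by
  obtain ⟨V', U', i, p, hV, hU, hs⟩ := CP.cores B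
  exact ⟨V', U', i, p, ⟨hVU hV, hV⟩, hU, hs⟩

/-- any morphism from an object of `𝓑⁻` to an object of `𝒱` factors through `𝒲` -/
lemma factorsThru_of_src_Bminus_tgt_V {A B₀ : C} (hA : A ∈ CP.Bminus)
    (hB : B₀ ∈ CP.V) (f : A ⟶ B₀) : FactorsThru CP.W f := by
  obtain ⟨W₀, U₀, i, p, hW, hU, hs⟩ := hA
  obtain ⟨P, f', b, hpo, Z, g', hs'⟩ := E.pushout_infl i f ⟨U₀, p, hs⟩
  obtain ⟨e⟩ := E.coker_iso_of_pushout hs hpo hs'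
  have hZU : Z ∈ CP.U := CP.mem_U_of_iso e hU
  obtain ⟨r, hr⟩ := CP.ext_vanish hs' hZU hB
  refine ⟨W₀, i, b ≫ r, hW, ?_⟩
  rw [← Category.assoc, ← hpo.w, Category.assoc, hr, Category.comp_id]

/-- any morphism from an object of `𝒰` to an object of `𝓑⁺` factors through `𝒲` -/
lemma factorsThru_of_src_U_tgt_Bplus {A B₀ : C} (hB : B₀ ∈ CP.U)
    (hA : A ∈ CP.Bplus) (f : B₀ ⟶ A) : FactorsThru CP.W f := by
  obtain ⟨V₀, W₀, i, p₀, hV, hW, hs⟩ := hA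
  obtain ⟨P, g₈, c₈, hpb, Z, f₈, hs₈⟩ := E.pullback_defl p₀ f ⟨V₀, i, hs⟩
  obtain ⟨e⟩ := E.ker_iso_of_pullback hs hpb hs₈
  have hZV : Z ∈ CP.V := CP.mem_V_of_iso e hV
  obtain ⟨r, hr⟩ := CP.ext_vanish hs₈ hB hZV
  obtain ⟨s, hsec⟩ := E.ses_section_of_retraction hs₈ hr
  refine ⟨W₀, s ≫ c₈, p₀, hW, ?_⟩
  rw [Category.assoc, ← hpb.w, ← Category.assoc, hsec, Category.id_comp]

lemma mem_V_of_hfactors (hUV : CP.U ⊆ CP.V) (B : C)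
    (hf : ∀ (A : C), A ∈ CP.Bminus → ∀ f : A ⟶ B, FactorsThru CP.W f) :
    B ∈ CP.V := by
  obtain ⟨Vb, Ub, i, p, hVb, hUb, hip⟩ := CP.cores B
  obtain ⟨V₁, U₁, j, q, hV₁, hU₁, hjq⟩ := CP.res Vb
  have hU₁W : U₁ ∈ CP.W := ⟨hU₁, hUV hU₁⟩
  obtain ⟨K, π, c, hpb, Z₄, f₄, hs₄⟩ := E.pullback_defl q i ⟨V₁, j, hjq⟩
  obtain ⟨e₄⟩ := E.ker_iso_of_pullback hjq hpb hs₄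
  have hZ₄ : Z₄ ∈ CP.V := CP.mem_V_of_iso e₄ hV₁
  have hcses : E.IsSES c (q ≫ p) := E.pullback_infl_ses hip hjq hpb
  have hK : K ∈ CP.Bminus := ⟨U₁, Ub, c, q ≫ p, hU₁W, hUb, hcses⟩
  obtain ⟨W₂, α, β, hW₂, hαβ⟩ := hf K hK π
  -- produce t₅ : W₂ ⟶ K with t₅ ≫ π = β
  obtain ⟨P₅, g₅, c₅, hpb₅, Z₅, f₅, hs₅⟩ := E.pullback_defl π β ⟨Z₄, f₄, hs₄⟩
  obtain ⟨e₅⟩ := E.ker_iso_of_pullback hs₄ hpb₅ hs₅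
  have hZ₅ : Z₅ ∈ CP.V := CP.mem_V_of_iso e₅ hZ₄
  obtain ⟨r₅, hr₅⟩ := CP.ext_vanish hs₅ hW₂.1 hZ₅
  obtain ⟨s₅, hs₅'⟩ := E.ses_section_of_retraction hs₅ hr₅
  have ht₅ : (s₅ ≫ c₅) ≫ π = β := by
    rw [Category.assoc, ← hpb₅.w, ← Category.assoc, hs₅', Category.id_comp]
  -- K belongs to 𝒱
  have h0 : (𝟙 K - α ≫ s₅ ≫ c₅) ≫ π = 0 := by
    rw [Preadditive.sub_comp, Category.id_comp, Category.assoc, Category.assoc,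
      ← Category.assoc s₅, ht₅, hαβ, sub_self]
  obtain ⟨m, hm⟩ := E.ses_lift hs₄ _ h0
  have hKV : K ∈ CP.V := by
    refine CP.V_summand (CP.V_add hW₂.2 hZ₄)
      ⟨biprod.lift α m, biprod.desc (s₅ ≫ c₅) f₄, ?_⟩
    rw [biprod.lift_desc, hm]
    abel
  -- split the sequence K ↣ U₁ ↠ Ub
  obtain ⟨r, hr⟩ := CP.ext_vanish hcses hUb hKV
  obtain ⟨σ, hσ⟩ := E.ses_section_of_retraction hcses hr
  have hsp : (σ ≫ q) ≫ p = 𝟙 Ub := by rw [Category.assoc]; exact hσ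
  obtain ⟨rB, hrB⟩ := E.ses_retraction_of_section hip hsp
  exact CP.V_summand hVb ⟨i, rB, hrB⟩

lemma mem_U_of_hfactors (hVU : CP.V ⊆ CP.U) (B : C)
    (hf : ∀ (A : C), A ∈ CP.Bplus → ∀ f : B ⟶ A, FactorsThru CP.W f) :
    B ∈ CP.U := by
  obtain ⟨Vb, Ub, j', p', hVb, hUb, hs⟩ := CP.res B
  obtain ⟨V₁, U₁, q', pV, hV₁, hU₁, hq⟩ := CP.cores Ub
  have hV₁W : V₁ ∈ CP.W := ⟨hVU hV₁, hV₁⟩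
  obtain ⟨K, f', b, hpo, Z, g', hs'⟩ := E.pushout_infl q' p' ⟨U₁, pV, hq⟩
  obtain ⟨e⟩ := E.coker_iso_of_pushout hq hpo hs'
  have hZU : Z ∈ CP.U := CP.mem_U_of_iso e hU₁
  have hbses : E.IsSES (j' ≫ q') b := E.pushout_defl_ses hs hq hpo
  have hK : K ∈ CP.Bplus := ⟨Vb, V₁, j' ≫ q', b, hVb, hV₁W, hbses⟩
  obtain ⟨W₂, α', β', hW₂, hαβ⟩ := hf K hK f'
  -- produce t₆ : K ⟶ W₂ with f' ≫ t₆ = α'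
  obtain ⟨P₆, w₆, b₆, hpo₆, Z₆, g₆, hs₆⟩ := E.pushout_infl f' α' ⟨Z, g', hs'⟩
  obtain ⟨e₆⟩ := E.coker_iso_of_pushout hs' hpo₆ hs₆
  have hZ₆ : Z₆ ∈ CP.U := CP.mem_U_of_iso e₆ hZU
  obtain ⟨ρ, hρ⟩ := CP.ext_vanish hs₆ hZ₆ hW₂.2
  have ht₆ : f' ≫ b₆ ≫ ρ = α' := by
    rw [← Category.assoc, ← hpo₆.w, Category.assoc, hρ, Category.comp_id]
  -- K belongs to 𝒰
  have h0 : f' ≫ (𝟙 K - (b₆ ≫ ρ) ≫ β') = 0 := by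
    rw [Preadditive.comp_sub, Category.comp_id, ← Category.assoc, ht₆, hαβ, sub_self]
  obtain ⟨n, hn⟩ := E.ses_desc hs' _ h0
  have hKU : K ∈ CP.U := by
    refine CP.U_summand (CP.U_add (hVU hW₂.2) hZU)
      ⟨biprod.lift (b₆ ≫ ρ) g', biprod.desc β' n, ?_⟩
    rw [biprod.lift_desc, hn, Category.assoc]
    abel
  -- split the sequence Vb ↣ V₁ ↠ K
  obtain ⟨ρ', hρ'⟩ := CP.ext_vanish hbses hKU hVb
  have hr' : j' ≫ q' ≫ ρ' = 𝟙 Vb := by rw [← Category.assoc]; exact hρ'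
  obtain ⟨s', hs'p⟩ := E.ses_section_of_retraction hs hr'
  exact CP.U_summand hUb ⟨s', p', hs'p⟩

end CotorsionPair

end Aux

section Helpers

variable {D : Type*} [Category D]

/-- postcomposition with an isomorphism, as an equivalence of hom-types -/
def homPostEquiv {X Y Z : D} (e : Y ≅ Z) : (X ⟶ Y) ≃ (X ⟶ Z) :=
  ⟨fun f => f ≫ e.hom, fun g => g ≫ e.inv, fun f => by simp, fun g => by simp⟩

/-- conjugation by an isomorphism, as an equivalence of endomorphism types -/
def homConjEquiv {X Y : D} (e : X ≅ Y) : (X ⟶ X) ≃ (Y ⟶ Y) :=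
  ⟨fun f => e.inv ≫ f ≫ e.hom, fun g => e.hom ≫ g ≫ e.inv, fun f => by simp, fun g => by simp⟩

lemma isZero_iff_end [Limits.HasZeroMorphisms D] (X : D) :
    IsZero X ↔ Subsingleton (X ⟶ X) := by
  constructor
  · intro h
    exact ⟨fun f g => h.eq_of_src f g⟩
  · intro h
    rw [IsZero.iff_id_eq_zero]
    exact h.elim _ _

end Helpers

/-- if `𝒰 ⊆ 𝒱` then `H(B) = 0 ↔ B ∈ 𝒱`; if `𝒱 ⊆ 𝒰` then
`H(B) = 0 ↔ B ∈ 𝒰`. -/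
theorem stmt13 (E : ExactStructure C) (CP : CotorsionPair E)
    (hEP : E.EnoughProj) (hEI : E.EnoughInj)
    (σp : CP.QW ⥤ CP.BplusCat) (adj₁ : σp ⊣ CP.inclPlus)
    (σm : CP.QW ⥤ CP.BminusCat) (adj₂ : CP.inclMinus ⊣ σm)
    (H : C ⥤ CP.HeartCat)
    (hH : H ⋙ CP.inclHeart =
      CP.qf ⋙ σp ⋙ CP.inclPlus ⋙ σm ⋙ CP.inclMinus)
    [Abelian CP.HeartCat]
    (B : C) :
    (CP.U ⊆ CP.V → (IsZero (H.obj B) ↔ B ∈ CP.V)) ∧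
    (CP.V ⊆ CP.U → (IsZero (H.obj B) ↔ B ∈ CP.U)) := by
  let P : CP.QW := CP.inclPlus.obj (σp.obj (CP.qf.obj B))
  let M : CP.BminusCat := σm.obj P
  let X₀ : CP.QW := CP.inclMinus.obj M
  have hobj : CP.inclHeart.obj (H.obj B) = X₀ := Functor.congr_obj hH B
  have key : Subsingleton ((CP.inclHeart.obj (H.obj B) : CP.QW) ⟶ CP.inclHeart.obj (H.obj B))
      ↔ Subsingleton (X₀ ⟶ X₀) := by rw [hobj]
  have hiszero_iff : IsZero (H.obj B) ↔ Subsingleton (X₀ ⟶ X₀) :=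
    (isZero_iff_end _).trans ((Equiv.subsingleton_congr (ObjectProperty.fullyFaithfulι _).homEquiv).trans key)
  constructor
  · -- case 𝒰 ⊆ 𝒱
    intro hUV
    have hBp : (CP.qf.obj B).as ∈ CP.Bplus := CP.mem_Bplus_all hUV B
    let bp : CP.BplusCat := ⟨CP.qf.obj B, hBp⟩
    haveI : IsIso (adj₁.counit.app bp) := inferInstance
    let e₁ : P ≅ CP.qf.obj B := CP.inclPlus.mapIso (asIso (adj₁.counit.app bp))
    rw [hiszero_iff]
    constructor
    · -- vanishing implies B ∈ 𝒱
      intro hsub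
      apply CP.mem_V_of_hfactors hUV B
      intro A hA f
      have hz : FactorsThru CP.W (𝟙 X₀.as) :=
        CP.factorsThru_of_subsingleton hsub (𝟙 X₀.as)
      let A' : CP.BminusCat := ⟨CP.qf.obj A, hA⟩
      have hA1 : Subsingleton (CP.qf.obj A ⟶ CP.qf.obj X₀.as) :=
        CP.subsingleton_qhom (fun g => CP.factorsThru_of_wzero_tgt hz g)
      have hA3 : Subsingleton (CP.qf.obj A ⟶ P) :=
        @Equiv.subsingleton _ _ (adj₂.homEquiv A' P) (@Equiv.subsingleton _ _ (ObjectProperty.fullyFaithfulι _).homEquiv hA1)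
      have hA4 : Subsingleton (CP.qf.obj A ⟶ CP.qf.obj B) :=
        @Equiv.subsingleton _ _ (homPostEquiv e₁.symm) hA3
      exact CP.factorsThru_of_subsingleton hA4 f
    · -- B ∈ 𝒱 implies vanishing
      intro hB
      have h1 : Subsingleton (CP.qf.obj X₀.as ⟶ CP.qf.obj B) :=
        CP.subsingleton_qhom (fun f => CP.factorsThru_of_src_Bminus_tgt_V M.property hB f)
      have h3 : Subsingleton (X₀ ⟶ P) :=
        @Equiv.subsingleton _ _ (homPostEquiv e₁) h1
      exact @Equiv.subsingleton _ _ ((ObjectProperty.fullyFaithfulι _).homEquiv.symm.trans (adj₂.homEquiv M P).symm) h3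
  · -- case 𝒱 ⊆ 𝒰
    intro hVU
    let Pp : CP.BplusCat := σp.obj (CP.qf.obj B)
    let Pm : CP.BminusCat := ⟨P, CP.mem_Bminus_all hVU P.as⟩
    haveI : IsIso (adj₂.counit.app P) :=
      adj₂.isIso_counit_app_of_iso (Y := Pm) (Iso.refl P)
    let e₂ : X₀ ≅ P := asIso (adj₂.counit.app P)
    rw [hiszero_iff]
    constructor
    · -- vanishing implies B ∈ 𝒰
      intro hsub
      apply CP.mem_U_of_hfactors hVU B
      intro A hA f
      have hp : Subsingleton (CP.qf.obj P.as ⟶ CP.qf.obj P.as) :=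
        @Equiv.subsingleton _ _ (homConjEquiv e₂).symm hsub
      have hz : FactorsThru CP.W (𝟙 P.as) :=
        CP.factorsThru_of_subsingleton hp (𝟙 P.as)
      let A' : CP.BplusCat := ⟨CP.qf.obj A, hA⟩
      have hA1 : Subsingleton (CP.qf.obj P.as ⟶ CP.qf.obj A) :=
        CP.subsingleton_qhom (fun g => CP.factorsThru_of_wzero_src hz g)
      have hA2 : Subsingleton (CP.qf.obj B ⟶ CP.qf.obj A) :=
        @Equiv.subsingleton _ _ (adj₁.homEquiv (CP.qf.obj B) A').symm (@Equiv.subsingleton _ _ (ObjectProperty.fullyFaithfulι _).homEquiv hA1)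
      exact CP.factorsThru_of_subsingleton hA2 f
    · -- B ∈ 𝒰 implies vanishing
      intro hB
      have h1 : Subsingleton (CP.qf.obj B ⟶ CP.qf.obj P.as) :=
        CP.subsingleton_qhom (fun f => CP.factorsThru_of_src_U_tgt_Bplus hB Pp.property f)
      have h2 : Subsingleton ((Pp : CP.BplusCat) ⟶ Pp) :=
        @Equiv.subsingleton _ _ (adj₁.homEquiv (CP.qf.obj B) Pp) h1
      exact @Equiv.subsingleton _ _ (homConjEquiv e₂) (@Equiv.subsingleton _ _ (ObjectProperty.fullyFaithfulι _).homEquiv.symm h2)
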